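/- If n = a₁b₁ = a₂b₂ with a₁ < a₂ ≤ b₂ < b₁ positive integers all in the interval [x^{1/2} - c₂x^θ, x^{1/2} + c₂x^θ] with 0 ≤ θ < 1/2, then for x sufficiently large (depending on c₂, θ), gcd(a₁, a₂) > 1. -/

import Mathlib

/-- If `n = a₁b₁ = a₂b₂` with `a₁ < a₂ ≤ b₂ < b₁` positive integers all in
`[x^(1/2) - c₂ x^θ, x^(1/2) + c₂ x^θ]` with `0 ≤ θ < 1/2`, then for `x`
sufficiently large (depending on `c₂, θ`), `gcd(a₁, a₂) > 1`. -/
theorem stmt0 (c₂ θ : ℝ) (hc₂ : 0 < c₂) (hθ0 : 0 ≤ θ) (hθ : θ < 1/2) :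
    ∃ x₀ : ℝ, ∀ x : ℝ, x₀ ≤ x →
      ∀ a₁ a₂ b₁ b₂ : ℕ, 0 < a₁ → a₁ < a₂ → a₂ ≤ b₂ → b₂ < b₁ →
        a₁ * b₁ = a₂ * b₂ →
        x ^ ((1:ℝ)/2) - c₂ * x ^ θ ≤ (a₁ : ℝ) → (a₁ : ℝ) ≤ x ^ ((1:ℝ)/2) + c₂ * x ^ θ →
        x ^ ((1:ℝ)/2) - c₂ * x ^ θ ≤ (a₂ : ℝ) → (a₂ : ℝ) ≤ x ^ ((1:ℝ)/2) + c₂ * x ^ θ →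
        x ^ ((1:ℝ)/2) - c₂ * x ^ θ ≤ (b₂ : ℝ) → (b₂ : ℝ) ≤ x ^ ((1:ℝ)/2) + c₂ * x ^ θ →
        x ^ ((1:ℝ)/2) - c₂ * x ^ θ ≤ (b₁ : ℝ) → (b₁ : ℝ) ≤ x ^ ((1:ℝ)/2) + c₂ * x ^ θ →
        1 < Nat.gcd a₁ a₂ := by
  set e : ℝ := 1/2 - θ with he
  have he0 : 0 < e := by simp [he]; linarith
  refine ⟨(3*c₂) ^ (1/e) + 1, fun x hx a₁ a₂ b₁ b₂ h1 h12 h2b h2 hmul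
    _ _ ha2l _ _ _ hb1l hb1u => ?_⟩
  have hy : (0:ℝ) < (3*c₂) ^ (1/e) := Real.rpow_pos_of_pos (by linarith) _
  have hx1 : (3*c₂) ^ (1/e) < x := by linarith
  have hx0 : (0:ℝ) < x := lt_trans hy hx1
  -- key analytic fact: x^(1/2) > 3 c₂ x^θ
  have hkey : 3 * c₂ * x ^ θ < x ^ ((1:ℝ)/2) := by
    have h1 : 3*c₂ < x ^ e := by
      have := Real.rpow_lt_rpow (le_of_lt hy) hx1 he0
      rwa [← Real.rpow_mul (by linarith : (0:ℝ) ≤ 3*c₂),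
        one_div_mul_cancel (ne_of_gt he0), Real.rpow_one] at this
    have h2 : x ^ ((1:ℝ)/2) = x ^ θ * x ^ e := by
      rw [← Real.rpow_add hx0, he]; ring_nf
    have hp : (0:ℝ) < x ^ θ := Real.rpow_pos_of_pos hx0 _
    rw [h2]
    calc 3 * c₂ * x ^ θ = x ^ θ * (3*c₂) := by ring
      _ < x ^ θ * x ^ e := by exact mul_lt_mul_of_pos_left h1 hp
  by_contra hg
  push_neg at hg
  have hgpos : 0 < Nat.gcd a₁ a₂ := Nat.gcd_pos_of_pos_left _ h1
  have hcop : Nat.Coprime a₁ a₂ := Nat.le_antisymm hg hgpos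
  have hdvd : a₂ ∣ b₁ := (Nat.Coprime.coprime_dvd_left (dvd_refl a₂)
    hcop.symm).dvd_of_dvd_mul_left ⟨b₂, hmul ▸ rfl⟩
  obtain ⟨k, hk⟩ := hdvd
  have ha2b1 : a₂ < b₁ := lt_of_le_of_lt h2b h2
  have hk2 : 2 ≤ k := by
    rcases k with _ | _ | k
    · simp at hk; omega
    · simp at hk; omega
    · omega
  have h2a : 2 * a₂ ≤ b₁ := by rw [hk]; nlinarith
  have h2a' : (2:ℝ) * (a₂:ℝ) ≤ (b₁:ℝ) := by exact_mod_cast h2a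
  linarith
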